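/- For all integers p, q, r ≥ 2 with 1/p + 1/q + 1/r ≤ 1, one has 2 ≤ μ(p,q,r) ≤ 3/√2. -/

import Mathlib

/-- The vertex set of the tree `T_{p,q,r}`: a central vertex (`none`) together
with three arms of `p-1`, `q-1` and `r-1` vertices. -/
abbrev TVertex (p q r : ℕ) : Type := Option (Fin (p - 1) ⊕ (Fin (q - 1) ⊕ Fin (r - 1)))

/-- Entry recording an edge between positions `i` and `j` of a path. -/
def pathEntry (i j : ℕ) : ℝ := if i + 1 = j ∨ j + 1 = i then 1 else 0

/-- Entry recording the edge from the central vertex to position `i` of an arm. -/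
def tipEntry (i : ℕ) : ℝ := if i = 0 then 1 else 0

/-- The adjacency matrix of the tree `T_{p,q,r}`: a central vertex joined to one
end of each of three paths with `p-1`, `q-1`, and `r-1` vertices respectively. -/
def adjT (p q r : ℕ) : Matrix (TVertex p q r) (TVertex p q r) ℝ :=
  fun v w =>
    match v, w with
    | none, none => 0
    | none, some (Sum.inl i) => tipEntry i
    | none, some (Sum.inr (Sum.inl i)) => tipEntry i
    | none, some (Sum.inr (Sum.inr i)) => tipEntry i
    | some (Sum.inl i), none => tipEntry i
    | some (Sum.inr (Sum.inl i)), none => tipEntry i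
    | some (Sum.inr (Sum.inr i)), none => tipEntry i
    | some (Sum.inl i), some (Sum.inl j) => pathEntry i j
    | some (Sum.inr (Sum.inl i)), some (Sum.inr (Sum.inl j)) => pathEntry i j
    | some (Sum.inr (Sum.inr i)), some (Sum.inr (Sum.inr j)) => pathEntry i j
    | _, _ => 0

/-- `μ(p,q,r)`, the largest eigenvalue of the adjacency matrix of `T_{p,q,r}`. -/
noncomputable def muT (p q r : ℕ) : ℝ :=
  sSup {μ : ℝ | ∃ x : TVertex p q r → ℝ, x ≠ 0 ∧ (adjT p q r).mulVec x = μ • x}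

open Matrix

/-! ### Auxiliary lemmas -/

section Aux

lemma exists_max_eig {n : Type*} [Fintype n] [DecidableEq n] [Nonempty n] {A : Matrix n n ℝ}
    (hA : A.IsHermitian) :
    ∃ μ : ℝ, (∃ x : n → ℝ, x ≠ 0 ∧ A *ᵥ x = μ • x) ∧
      ∀ z : n → ℝ, z ⬝ᵥ (A *ᵥ z) ≤ μ * (z ⬝ᵥ z) := by
  obtain ⟨i0, hi0⟩ := Finite.exists_max hA.eigenvalues
  refine ⟨hA.eigenvalues i0, ⟨_, ?_, hA.mulVec_eigenvectorBasis i0⟩, ?_⟩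
  · have h1 := hA.eigenvectorBasis.orthonormal.ne_zero i0
    intro hc
    apply h1
    ext j
    exact congrFun hc j
  · intro z
    set U : Matrix n n ℝ := (hA.eigenvectorUnitary : Matrix n n ℝ) with hU
    have hstar : star U = Uᵀ := by
      ext i j; simp [Matrix.star_eq_conjTranspose, Matrix.conjTranspose_apply]
    set y : n → ℝ := star U *ᵥ z with hy
    have hzU : z ᵥ* U = y := by
      rw [hy, hstar]; ext j; simp [Matrix.vecMul, Matrix.mulVec, dotProduct,
        Matrix.transpose_apply, mul_comm]
    have h2 : z ⬝ᵥ (A *ᵥ z) = ∑ i, hA.eigenvalues i * (y i)^2 := by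
      conv_lhs => rw [hA.spectral_theorem, Unitary.conjStarAlgAut_apply]
      rw [← Matrix.mulVec_mulVec, ← Matrix.mulVec_mulVec, Matrix.dotProduct_mulVec, hzU]
      simp [dotProduct, Matrix.mulVec_diagonal]
      congr 1; ext i; ring
    have h3 : z ⬝ᵥ z = ∑ i, (y i)^2 := by
      have hUU : U * star U = 1 := (Matrix.mem_unitaryGroup_iff).mp hA.eigenvectorUnitary.2
      calc z ⬝ᵥ z = z ⬝ᵥ ((U * star U) *ᵥ z) := by rw [hUU, Matrix.one_mulVec]
        _ = z ⬝ᵥ (U *ᵥ y) := by rw [← Matrix.mulVec_mulVec, hy]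
        _ = (z ᵥ* U) ⬝ᵥ y := by rw [Matrix.dotProduct_mulVec]
        _ = ∑ i, (y i)^2 := by rw [hzU]; simp [dotProduct, sq]
    rw [h2, h3, Finset.mul_sum]
    apply Finset.sum_le_sum
    intro i _
    exact mul_le_mul_of_nonneg_right (hi0 i) (sq_nonneg _)

lemma eig_le_of_dominant {n : Type*} [Fintype n] [Nonempty n] (A : Matrix n n ℝ)
    (hpos : ∀ i j, 0 ≤ A i j) (y : n → ℝ) (hy : ∀ i, 0 < y i) (μ : ℝ)
    (hAy : ∀ i, (A *ᵥ y) i ≤ μ * y i) {lam : ℝ} {x : n → ℝ} (hx : x ≠ 0)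
    (hev : A *ᵥ x = lam • x) : lam ≤ μ := by
  obtain ⟨i, hi⟩ := Finite.exists_max (fun i => |x i| / y i)
  set t := |x i| / y i with ht
  have htpos : 0 < t := by
    obtain ⟨j, hj⟩ := Function.ne_iff.mp hx
    have : 0 < |x j| / y j := div_pos (abs_pos.mpr hj) (hy j)
    exact lt_of_lt_of_le this (hi j)
  have hbound : ∀ w, |x w| ≤ t * y w := fun w =>
    (div_le_iff₀ (hy w)).mp (hi w)
  have hxi : |x i| = t * y i := by
    rw [ht, div_mul_cancel₀ _ (hy i).ne']
  have key : |lam| * |x i| ≤ t * (μ * y i) := by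
    have h1 : (A *ᵥ x) i = lam * x i := by rw [hev]; rfl
    calc |lam| * |x i| = |lam * x i| := (abs_mul _ _).symm
      _ = |(A *ᵥ x) i| := by rw [h1]
      _ = |∑ w, A i w * x w| := by rfl
      _ ≤ ∑ w, |A i w * x w| := Finset.abs_sum_le_sum_abs _ _
      _ ≤ ∑ w, A i w * (t * y w) := by
          apply Finset.sum_le_sum; intro w _
          rw [abs_mul, abs_of_nonneg (hpos i w)]
          exact mul_le_mul_of_nonneg_left (hbound w) (hpos i w)
      _ = t * ∑ w, A i w * y w := by rw [Finset.mul_sum]; congr 1; ext w; ring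
      _ = t * (A *ᵥ y) i := rfl
      _ ≤ t * (μ * y i) := mul_le_mul_of_nonneg_left (hAy i) htpos.le
  have habs : |lam| ≤ μ := by
    rw [hxi] at key
    exact (mul_le_mul_iff_of_pos_right (mul_pos htpos (hy i))).mp
      (by calc |lam| * (t * y i) ≤ t * (μ * y i) := key
            _ = μ * (t * y i) := by ring)
  exact (le_abs_self lam).trans habs

lemma sum_tip_mul {m : ℕ} (hm : 0 < m) (f : Fin m → ℝ) :
    ∑ j : Fin m, tipEntry (j : ℕ) * f j = f ⟨0, hm⟩ := by
  rw [Finset.sum_eq_single ⟨0, hm⟩]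
  · simp [tipEntry]
  · intro j _ hj
    have : (j : ℕ) ≠ 0 := by
      intro hc; apply hj; exact Fin.ext hc
    simp [tipEntry, this]
  · intro hc; exact absurd (Finset.mem_univ _) hc

lemma sum_path_mul {m : ℕ} (i : Fin m) (f : Fin m → ℝ) :
    ∑ j : Fin m, pathEntry (i : ℕ) (j : ℕ) * f j =
      (if h : (i : ℕ) + 1 < m then f ⟨(i : ℕ) + 1, h⟩ else 0) +
      (if 0 < (i : ℕ) then f ⟨(i : ℕ) - 1, by omega⟩ else 0) := by
  have step : ∀ j : Fin m, pathEntry (i : ℕ) (j : ℕ) * f j =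
      (if (i : ℕ) + 1 = (j : ℕ) then f j else 0) +
      (if (j : ℕ) + 1 = (i : ℕ) then f j else 0) := by
    intro j
    unfold pathEntry
    by_cases h1 : (i : ℕ) + 1 = (j : ℕ)
    · rw [if_pos (Or.inl h1), if_pos h1, if_neg (by omega)]; ring
    · by_cases h2 : (j : ℕ) + 1 = (i : ℕ)
      · rw [if_pos (Or.inr h2), if_neg h1, if_pos h2]; ring
      · rw [if_neg (by tauto), if_neg h1, if_neg h2]; ring
  rw [Finset.sum_congr rfl (fun j _ => step j), Finset.sum_add_distrib]
  congr 1
  · split_ifs with h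
    · rw [Finset.sum_eq_single ⟨(i : ℕ) + 1, h⟩]
      · simp
      · intro j _ hj
        rw [if_neg]
        intro hc; exact hj (Fin.ext hc.symm)
      · intro hc; exact absurd (Finset.mem_univ _) hc
    · apply Finset.sum_eq_zero
      intro j _
      rw [if_neg]
      intro hc
      exact h (hc ▸ j.isLt)
  · split_ifs with h
    · rw [Finset.sum_eq_single ⟨(i : ℕ) - 1, by omega⟩]
      · simp; omega
      · intro j _ hj
        rw [if_neg]
        intro hc; apply hj; apply Fin.ext; simp; omega
      · intro hc; exact absurd (Finset.mem_univ _) hc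
    · apply Finset.sum_eq_zero
      intro j _
      rw [if_neg]; omega

noncomputable def tc : ℝ := (Real.sqrt 2)⁻¹

lemma tc_pos : 0 < tc := by unfold tc; positivity

lemma tc_sq : tc ^ 2 = 1 / 2 := by
  unfold tc
  rw [inv_pow, Real.sq_sqrt (by norm_num : (0:ℝ) ≤ 2)]
  norm_num

lemma three_div_sqrt_two : 3 / Real.sqrt 2 = 3 * tc := by
  rw [div_eq_mul_inv]; rfl

lemma arm_lo (m a : ℕ) (hm : 2 ≤ m) (ha : a < m - 1) :
    2 * (((m:ℝ) - 1 - a) / m) ≤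
      tipEntry a * 1 +
      ((if h : a + 1 < m - 1 then ((m:ℝ) - 1 - ((a+1 : ℕ):ℝ)) / m else 0) +
       (if 0 < a then ((m:ℝ) - 1 - ((a-1 : ℕ):ℝ)) / m else 0)) := by
  have hm0 : (0:ℝ) < m := by exact_mod_cast Nat.lt_of_lt_of_le (by norm_num) hm
  unfold tipEntry
  split_ifs with h1 h2 h3 h4 h5 h6 <;>
    try (exfalso; omega)
  all_goals try push_cast [Nat.cast_sub (show (1:ℕ) ≤ a from by omega)]
  all_goals push_cast
  · rw [show ((a:ℝ)) = 0 from by exact_mod_cast h1]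
    field_simp
    linarith
  · rw [show ((a:ℝ)) = 0 from by exact_mod_cast h1,
      show ((m:ℝ)) = 2 from by exact_mod_cast (show m = 2 by omega)]
    norm_num
  · exact le_of_eq (by ring)
  · rw [show ((a:ℝ)) = (m:ℝ) - 2 from by
      rw [show ((a:ℝ)) = ((m - 2 : ℕ):ℝ) from by exact_mod_cast (show a = m - 2 by omega)]
      push_cast [Nat.cast_sub (show (2:ℕ) ≤ m from hm)]; ring]
    exact le_of_eq (by ring)

lemma arm_up (m a : ℕ) (hm : 2 ≤ m) (ha : a < m - 1) :
    tipEntry a * 1 +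
      ((if h : a + 1 < m - 1 then tc ^ ((a+1) + 1) else 0) +
       (if 0 < a then tc ^ ((a-1) + 1) else 0)) ≤ (3 / Real.sqrt 2) * tc ^ (a + 1) := by
  have h0 : ∀ k : ℕ, tc ^ k = 2 * tc ^ (k + 2) := by
    intro k
    have h' : tc ^ (k+2) = tc ^ k * tc ^ 2 := by ring
    rw [h', tc_sq]; ring
  rw [three_div_sqrt_two, show 3 * tc * tc ^ (a+1) = 3 * tc ^ (a+2) from by ring]
  have hpow : 0 < tc ^ (a+2) := pow_pos tc_pos _
  unfold tipEntry
  split_ifs with h1 h2 h3 h4 h5 h6 <;>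
    try (exfalso; omega)
  · subst h1
    have h1' := h0 0
    rw [pow_zero] at h1'
    norm_num at h1' ⊢
    linarith [h1', hpow]
  · subst h1
    have h1' := h0 0
    rw [pow_zero] at h1'
    norm_num at h1' ⊢
    linarith [h1', hpow]
  · rw [Nat.sub_add_cancel (show 1 ≤ a from by omega)]
    linarith [h0 a, hpow]
  · rw [Nat.sub_add_cancel (show 1 ≤ a from by omega)]
    linarith [h0 a, hpow]

end Aux

section Tree

variable (p q r : ℕ)

lemma pathEntry_nonneg (i j : ℕ) : 0 ≤ pathEntry i j := by
  unfold pathEntry; split_ifs <;> norm_num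

lemma tipEntry_nonneg (i : ℕ) : 0 ≤ tipEntry i := by
  unfold tipEntry; split_ifs <;> norm_num

lemma adjT_nonneg : ∀ v w, 0 ≤ adjT p q r v w := by
  intro v w
  rcases v with _ | (i | (i | i)) <;> rcases w with _ | (j | (j | j)) <;>
    first
      | exact le_refl 0
      | exact tipEntry_nonneg _
      | exact pathEntry_nonneg _ _

lemma pathEntry_symm (i j : ℕ) : pathEntry i j = pathEntry j i := by
  unfold pathEntry
  simp only [or_comm]

lemma adjT_isHermitian : (adjT p q r).IsHermitian := by
  show (adjT p q r)ᴴ = adjT p q r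
  ext v w
  rw [Matrix.conjTranspose_apply]
  rcases v with _ | (i | (i | i)) <;> rcases w with _ | (j | (j | j)) <;>
    simp only [adjT, star_trivial] <;>
    first
      | rfl
      | exact pathEntry_symm _ _

lemma mulVec_expand (x : TVertex p q r → ℝ) (v : TVertex p q r) :
    (adjT p q r *ᵥ x) v =
      adjT p q r v none * x none
      + ∑ i : Fin (p-1), adjT p q r v (some (Sum.inl i)) * x (some (Sum.inl i))
      + ∑ i : Fin (q-1), adjT p q r v (some (Sum.inr (Sum.inl i))) * x (some (Sum.inr (Sum.inl i)))
      + ∑ i : Fin (r-1), adjT p q r v (some (Sum.inr (Sum.inr i))) * x (some (Sum.inr (Sum.inr i))) := by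
  show ∑ w, adjT p q r v w * x w = _
  rw [Fintype.sum_option, Fintype.sum_sum_type, Fintype.sum_sum_type]
  ring

lemma mulVec_center (x : TVertex p q r → ℝ) :
    (adjT p q r *ᵥ x) none =
      (∑ i : Fin (p-1), tipEntry (i:ℕ) * x (some (Sum.inl i)))
      + (∑ i : Fin (q-1), tipEntry (i:ℕ) * x (some (Sum.inr (Sum.inl i))))
      + (∑ i : Fin (r-1), tipEntry (i:ℕ) * x (some (Sum.inr (Sum.inr i)))) := by
  rw [mulVec_expand]
  show (0:ℝ) * x none + _ + _ + _ = _
  rw [zero_mul, zero_add]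
  rfl

lemma mulVec_arm1 (x : TVertex p q r → ℝ) (i : Fin (p-1)) :
    (adjT p q r *ᵥ x) (some (Sum.inl i)) =
      tipEntry (i:ℕ) * x none + ∑ j : Fin (p-1), pathEntry (i:ℕ) (j:ℕ) * x (some (Sum.inl j)) := by
  rw [mulVec_expand]
  have hz1 : ∑ j : Fin (q-1),
      adjT p q r (some (Sum.inl i)) (some (Sum.inr (Sum.inl j))) * x (some (Sum.inr (Sum.inl j))) = 0 :=
    Finset.sum_eq_zero (fun j _ => by show (0:ℝ) * _ = 0; ring)
  have hz2 : ∑ j : Fin (r-1),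
      adjT p q r (some (Sum.inl i)) (some (Sum.inr (Sum.inr j))) * x (some (Sum.inr (Sum.inr j))) = 0 :=
    Finset.sum_eq_zero (fun j _ => by show (0:ℝ) * _ = 0; ring)
  rw [hz1, hz2, add_zero, add_zero]
  rfl

lemma mulVec_arm2 (x : TVertex p q r → ℝ) (i : Fin (q-1)) :
    (adjT p q r *ᵥ x) (some (Sum.inr (Sum.inl i))) =
      tipEntry (i:ℕ) * x none + ∑ j : Fin (q-1), pathEntry (i:ℕ) (j:ℕ) * x (some (Sum.inr (Sum.inl j))) := by
  rw [mulVec_expand]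
  have hz1 : ∑ j : Fin (p-1),
      adjT p q r (some (Sum.inr (Sum.inl i))) (some (Sum.inl j)) * x (some (Sum.inl j)) = 0 :=
    Finset.sum_eq_zero (fun j _ => by show (0:ℝ) * _ = 0; ring)
  have hz2 : ∑ j : Fin (r-1),
      adjT p q r (some (Sum.inr (Sum.inl i))) (some (Sum.inr (Sum.inr j))) * x (some (Sum.inr (Sum.inr j))) = 0 :=
    Finset.sum_eq_zero (fun j _ => by show (0:ℝ) * _ = 0; ring)
  rw [hz1, hz2, add_zero, add_zero]
  rfl

lemma mulVec_arm3 (x : TVertex p q r → ℝ) (i : Fin (r-1)) :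
    (adjT p q r *ᵥ x) (some (Sum.inr (Sum.inr i))) =
      tipEntry (i:ℕ) * x none + ∑ j : Fin (r-1), pathEntry (i:ℕ) (j:ℕ) * x (some (Sum.inr (Sum.inr j))) := by
  rw [mulVec_expand]
  have hz1 : ∑ j : Fin (p-1),
      adjT p q r (some (Sum.inr (Sum.inr i))) (some (Sum.inl j)) * x (some (Sum.inl j)) = 0 :=
    Finset.sum_eq_zero (fun j _ => by show (0:ℝ) * _ = 0; ring)
  have hz2 : ∑ j : Fin (q-1),
      adjT p q r (some (Sum.inr (Sum.inr i))) (some (Sum.inr (Sum.inl j))) * x (some (Sum.inr (Sum.inl j))) = 0 :=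
    Finset.sum_eq_zero (fun j _ => by show (0:ℝ) * _ = 0; ring)
  rw [hz1, hz2, add_zero, add_zero]
  rfl

/-- The lower-bound test vector. -/
noncomputable def xlo : TVertex p q r → ℝ
  | none => 1
  | some (Sum.inl i) => ((p:ℝ) - 1 - (i:ℕ)) / p
  | some (Sum.inr (Sum.inl i)) => ((q:ℝ) - 1 - (i:ℕ)) / q
  | some (Sum.inr (Sum.inr i)) => ((r:ℝ) - 1 - (i:ℕ)) / r

/-- The upper-bound dominant vector. -/
noncomputable def yup : TVertex p q r → ℝ
  | none => 1
  | some (Sum.inl i) => tc ^ ((i:ℕ) + 1)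
  | some (Sum.inr (Sum.inl i)) => tc ^ ((i:ℕ) + 1)
  | some (Sum.inr (Sum.inr i)) => tc ^ ((i:ℕ) + 1)

end Tree

/-- If `p, q, r ≥ 2` and `1/p + 1/q + 1/r ≤ 1` then `2 ≤ μ(p,q,r) ≤ 3/√2`. -/
theorem muT_between_two_and_three_over_sqrt_two (p q r : ℕ)
    (hp : 2 ≤ p) (hq : 2 ≤ q) (hr : 2 ≤ r)
    (h : 1 / (p : ℝ) + 1 / (q : ℝ) + 1 / (r : ℝ) ≤ 1) :
    2 ≤ muT p q r ∧ muT p q r ≤ 3 / Real.sqrt 2 := by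
  have hp1 : 0 < p - 1 := by omega
  have hq1 : 0 < q - 1 := by omega
  have hr1 : 0 < r - 1 := by omega
  have hp0 : (0:ℝ) < p := by exact_mod_cast (by omega : 0 < p)
  have hq0 : (0:ℝ) < q := by exact_mod_cast (by omega : 0 < q)
  have hr0 : (0:ℝ) < r := by exact_mod_cast (by omega : 0 < r)
  set A := adjT p q r with hA
  set S := {μ : ℝ | ∃ x : TVertex p q r → ℝ, x ≠ 0 ∧ A.mulVec x = μ • x} with hS
  -- upper bound on every eigenvalue
  have hyup_pos : ∀ v, 0 < yup p q r v := by
    intro v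
    rcases v with _ | (i | (i | i))
    · exact one_pos
    all_goals exact pow_pos tc_pos _
  have hAy : ∀ v, (A *ᵥ yup p q r) v ≤ (3 / Real.sqrt 2) * yup p q r v := by
    intro v
    rcases v with _ | (i | (i | i))
    · rw [mulVec_center, sum_tip_mul hp1, sum_tip_mul hq1, sum_tip_mul hr1]
      show tc ^ (0+1) + tc ^ (0+1) + tc ^ (0+1) ≤ (3 / Real.sqrt 2) * 1
      rw [three_div_sqrt_two]
      ring_nf
      exact le_refl _
    · rw [mulVec_arm1, sum_path_mul]
      exact arm_up p (i:ℕ) hp i.isLt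
    · rw [mulVec_arm2, sum_path_mul]
      exact arm_up q (i:ℕ) hq i.isLt
    · rw [mulVec_arm3, sum_path_mul]
      exact arm_up r (i:ℕ) hr i.isLt
  have hub : ∀ lam ∈ S, lam ≤ 3 / Real.sqrt 2 := by
    rintro lam ⟨x, hx, hev⟩
    exact eig_le_of_dominant A (adjT_nonneg p q r) (yup p q r) hyup_pos _ hAy hx hev
  have hbdd : BddAbove S := ⟨3 / Real.sqrt 2, fun lam hl => hub lam hl⟩
  -- the top eigenvalue
  obtain ⟨μ0, ⟨x0, hx0, hev0⟩, hray⟩ := exists_max_eig (adjT_isHermitian p q r)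
  have hmem : μ0 ∈ S := ⟨x0, hx0, hev0⟩
  -- lower bound
  have hxlo_nonneg : ∀ v, 0 ≤ xlo p q r v := by
    intro v
    rcases v with _ | (i | (i | i))
    · exact zero_le_one
    · exact div_nonneg (by
        have : ((i:ℕ):ℝ) ≤ (p:ℝ) - 1 := by
          have h' : (i:ℕ) ≤ p - 1 := le_of_lt i.isLt
          have h'' := (Nat.cast_le (α := ℝ)).mpr h'
          push_cast [Nat.cast_sub (show 1 ≤ p from by omega)] at h''
          linarith
        linarith) hp0.le
    · exact div_nonneg (by
        have : ((i:ℕ):ℝ) ≤ (q:ℝ) - 1 := by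
          have h' : (i:ℕ) ≤ q - 1 := le_of_lt i.isLt
          have h'' := (Nat.cast_le (α := ℝ)).mpr h'
          push_cast [Nat.cast_sub (show 1 ≤ q from by omega)] at h''
          linarith
        linarith) hq0.le
    · exact div_nonneg (by
        have : ((i:ℕ):ℝ) ≤ (r:ℝ) - 1 := by
          have h' : (i:ℕ) ≤ r - 1 := le_of_lt i.isLt
          have h'' := (Nat.cast_le (α := ℝ)).mpr h'
          push_cast [Nat.cast_sub (show 1 ≤ r from by omega)] at h''
          linarith
        linarith) hr0.le
  have hlow : ∀ v, 2 * xlo p q r v ≤ (A *ᵥ xlo p q r) v := by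
    intro v
    rcases v with _ | (i | (i | i))
    · rw [mulVec_center, sum_tip_mul hp1, sum_tip_mul hq1, sum_tip_mul hr1]
      show 2 * 1 ≤ ((p:ℝ) - 1 - ((0:ℕ):ℝ)) / p + ((q:ℝ) - 1 - ((0:ℕ):ℝ)) / q
        + ((r:ℝ) - 1 - ((0:ℕ):ℝ)) / r
      have e1 : ((p:ℝ) - 1 - ((0:ℕ):ℝ)) / p = 1 - 1 / p := by field_simp; simp
      have e2 : ((q:ℝ) - 1 - ((0:ℕ):ℝ)) / q = 1 - 1 / q := by field_simp; simp
      have e3 : ((r:ℝ) - 1 - ((0:ℕ):ℝ)) / r = 1 - 1 / r := by field_simp; simp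
      rw [e1, e2, e3]
      linarith
    · rw [mulVec_arm1, sum_path_mul]
      exact arm_lo p (i:ℕ) hp i.isLt
    · rw [mulVec_arm2, sum_path_mul]
      exact arm_lo q (i:ℕ) hq i.isLt
    · rw [mulVec_arm3, sum_path_mul]
      exact arm_lo r (i:ℕ) hr i.isLt
  have hquad : 2 * (xlo p q r ⬝ᵥ xlo p q r) ≤ xlo p q r ⬝ᵥ (A *ᵥ xlo p q r) := by
    rw [dotProduct, dotProduct, Finset.mul_sum]
    apply Finset.sum_le_sum
    intro v _
    calc 2 * (xlo p q r v * xlo p q r v) = xlo p q r v * (2 * xlo p q r v) := by ring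
      _ ≤ xlo p q r v * (A *ᵥ xlo p q r) v :=
          mul_le_mul_of_nonneg_left (hlow v) (hxlo_nonneg v)
  have hxx : (1:ℝ) ≤ xlo p q r ⬝ᵥ xlo p q r := by
    have hterm : (1:ℝ) = xlo p q r none * xlo p q r none := by norm_num [xlo]
    rw [hterm, dotProduct]
    exact Finset.single_le_sum (f := fun v => xlo p q r v * xlo p q r v)
      (fun v _ => mul_self_nonneg _) (Finset.mem_univ none)
  have hμ0 : 2 ≤ μ0 := by
    have h1 := hray (xlo p q r)
    nlinarith [hquad, hxx, h1]
  constructor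
  · exact le_trans hμ0 (le_csSup hbdd hmem)
  · exact csSup_le ⟨μ0, hmem⟩ hub
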